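/- Let K/L be an extension of number fields with rings of integers O_K and O_L, let 𝔭 be a nonzero prime ideal of O_L that is inert in K, i.e., 𝔓 = 𝔭O_K is a prime ideal of O_K. Then for every x ∈ O_K, the reduction modulo 𝔭 of the relative norm N_{K/L}(x) equals the norm of the residue field extension applied to the reduction of x: N_{K/L}(x) mod 𝔭 = N_{(O_K/𝔓)/(O_L/𝔭)}(x mod 𝔓). -/

import Mathlib

set_option synthInstance.maxHeartbeats 1000000
set_option maxHeartbeats 1000000

open NumberField

section LocalAux

open IsLocalRing

attribute [local instance] Ideal.Quotient.field

variable {R S : Type*} [CommRing R] [CommRing S] [Algebra R S]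
  [Module.Free R S] [Module.Finite R S]

lemma norm_quotient_mk_aux [IsLocalRing R] (x : S) :
    Algebra.norm (R ⧸ maximalIdeal R)
      (Ideal.Quotient.mk (Ideal.map (algebraMap R S) (maximalIdeal R)) x) =
      Ideal.Quotient.mk (maximalIdeal R) (Algebra.norm R x) := by
  classical
  let b := Module.Free.chooseBasis R S
  rw [Algebra.norm_eq_matrix_det b, Algebra.norm_eq_matrix_det (basisQuotient b),
    RingHom.map_det]
  congr 1
  ext i j
  simp only [RingHom.mapMatrix_apply, Matrix.map_apply,
    Algebra.leftMulMatrix_eq_repr_mul, basisQuotient_apply, ← map_mul, basisQuotient_repr]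

end LocalAux

section DedekindAux

open IsLocalRing

attribute [local instance] Ideal.Quotient.field

variable {R S : Type*} [CommRing R] [CommRing S] [Algebra R S]
variable (p : Ideal R) [p.IsMaximal]
variable {Rₚ Sₚ : Type*} [CommRing Rₚ] [CommRing Sₚ] [Algebra R Rₚ] [IsLocalization.AtPrime Rₚ p]
variable [IsLocalRing Rₚ] [Algebra S Sₚ] [Algebra R Sₚ] [Algebra Rₚ Sₚ]
variable [IsLocalization (Algebra.algebraMapSubmonoid S p.primeCompl) Sₚ]
variable [IsScalarTower R S Sₚ] [IsScalarTower R Rₚ Sₚ]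

variable (Rₚ S Sₚ)

lemma norm_quotient_eq_norm_localization_quotient (x : S) :
    Algebra.norm (R ⧸ p)
        (Ideal.Quotient.mk (Ideal.map (algebraMap R S) p) x) =
      (IsLocalization.AtPrime.equivQuotMaximalIdeal p Rₚ).symm
        (Algebra.norm (Rₚ ⧸ maximalIdeal Rₚ)
          (algebraMap S (Sₚ ⧸ Ideal.map (algebraMap Rₚ Sₚ) (maximalIdeal Rₚ)) x)) := by
  have : IsScalarTower R (Rₚ ⧸ maximalIdeal Rₚ)
      (Sₚ ⧸ Ideal.map (algebraMap Rₚ Sₚ) (maximalIdeal Rₚ)) := by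
    apply IsScalarTower.of_algebraMap_eq'
    rw [IsScalarTower.algebraMap_eq R Rₚ (Rₚ ⧸ _), IsScalarTower.algebraMap_eq R Rₚ (Sₚ ⧸ _),
      ← RingHom.comp_assoc, ← IsScalarTower.algebraMap_eq Rₚ]
  rw [Algebra.norm_eq_of_equiv_equiv (IsLocalization.AtPrime.equivQuotMaximalIdeal p Rₚ)
    (IsLocalization.AtPrime.equivQuotientMapMaximalIdeal S p Rₚ Sₚ)]
  · congr
  · ext x
    simp only [IsLocalization.AtPrime.equivQuotMaximalIdeal, RingHom.quotientKerEquivOfSurjective,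
      RingEquiv.coe_ringHom_trans, RingHom.coe_comp, RingHom.coe_coe, Function.comp_apply,
      Ideal.quotEquivOfEq_mk, RingHom.quotientKerEquivOfRightInverse.apply, RingHom.kerLift_mk,
      IsLocalization.AtPrime.equivQuotientMapMaximalIdeal,
      Ideal.Quotient.algebraMap_quotient_map_quotient]
    rw [← IsScalarTower.algebraMap_apply, ← IsScalarTower.algebraMap_apply]

end DedekindAux

section DedekindAux2

open IsLocalRing

attribute [local instance] Ideal.Quotient.field
attribute [local instance] FractionRing.liftAlgebra FractionRing.isScalarTower_liftAlgebra

variable {R S : Type*} [CommRing R] [CommRing S] [Algebra R S]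
variable (p : Ideal R) [p.IsMaximal]

open nonZeroDivisors in
lemma norm_quotient_eq_of_isDedekindDomain [IsDedekindDomain R] [IsDomain S]
    [Module.IsTorsionFree R S] [Module.Finite R S] [IsIntegrallyClosed S] [CharZero R]
    (hpbot : p ≠ ⊥) (x : S) :
    Algebra.norm (R ⧸ p)
        (Ideal.Quotient.mk (Ideal.map (algebraMap R S) p) x) =
      Ideal.Quotient.mk p (Algebra.intNorm R S x) := by
  let Rₚ := Localization.AtPrime p
  let Sₚ := Localization (Algebra.algebraMapSubmonoid S p.primeCompl)
  letI : Algebra Rₚ Sₚ := localizationAlgebra p.primeCompl S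
  haveI : IsScalarTower R Rₚ Sₚ := IsScalarTower.of_algebraMap_eq'
    (by rw [RingHom.algebraMap_toAlgebra, IsLocalization.map_comp, ← IsScalarTower.algebraMap_eq])
  haveI : IsLocalization (Submonoid.map (algebraMap R S) (Ideal.primeCompl p)) Sₚ :=
    inferInstanceAs (IsLocalization (Algebra.algebraMapSubmonoid S p.primeCompl) Sₚ)
  have e : Algebra.algebraMapSubmonoid S p.primeCompl ≤ S⁰ :=
    Submonoid.map_le_of_le_comap _ <| p.primeCompl_le_nonZeroDivisors.trans
      (nonZeroDivisors_le_comap_nonZeroDivisors_of_injective _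
        (FaithfulSMul.algebraMap_injective _ _))
  haveI : IsDomain Sₚ := IsLocalization.isDomain_of_le_nonZeroDivisors Sₚ e
  haveI : Module.IsTorsionFree Rₚ Sₚ := by
    rw [Module.isTorsionFree_iff_algebraMap_injective, RingHom.injective_iff_ker_eq_bot,
      RingHom.ker_eq_bot_iff_eq_zero]
    intro x hx
    obtain ⟨x, s, rfl⟩ := IsLocalization.mk'_surjective p.primeCompl x
    simp only [RingHom.algebraMap_toAlgebra, IsLocalization.map_mk', IsLocalization.mk'_eq_zero_iff,
      mul_eq_zero, Subtype.exists, exists_prop] at hx ⊢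
    obtain ⟨_, ⟨a, ha, rfl⟩, H⟩ := hx
    simp only [(injective_iff_map_eq_zero' _).mp (FaithfulSMul.algebraMap_injective R S)] at H
    refine ⟨a, ha, H⟩
  haveI : Module.Finite Rₚ Sₚ := Module.Finite.of_isLocalization R S p.primeCompl
  haveI : IsIntegrallyClosed Sₚ := isIntegrallyClosed_of_isLocalization _ _ e
  have : IsPrincipalIdealRing Rₚ := by
    have := (IsDedekindDomain.isDedekindDomainDvr R).2 p hpbot inferInstance
    infer_instance
  haveI : Module.Free Rₚ Sₚ := Module.free_of_finite_type_torsion_free'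
  haveI : IsDomain Rₚ :=
    IsLocalization.isDomain_of_le_nonZeroDivisors Rₚ p.primeCompl_le_nonZeroDivisors
  haveI : CharZero Rₚ :=
    charZero_of_injective_algebraMap (IsLocalization.injective (M := p.primeCompl) Rₚ
      p.primeCompl_le_nonZeroDivisors)
  letI : Algebra Rₚ (FractionRing Rₚ) := OreLocalization.instAlgebra
  letI : Algebra Rₚ (FractionRing Sₚ) := OreLocalization.instAlgebra
  haveI : CharZero (FractionRing Rₚ) :=
    charZero_of_injective_algebraMap (IsFractionRing.injective Rₚ (FractionRing Rₚ))
  haveI : IsIntegralClosure Sₚ Rₚ (FractionRing Sₚ) :=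
    IsIntegralClosure.of_isIntegrallyClosed _ _ _
  haveI : IsLocalization (Algebra.algebraMapSubmonoid Sₚ Rₚ⁰) (FractionRing Sₚ) :=
    IsIntegralClosure.isLocalization Rₚ (FractionRing Rₚ) (FractionRing Sₚ) Sₚ
  haveI : FiniteDimensional (FractionRing Rₚ) (FractionRing Sₚ) :=
    Module.Finite.of_isLocalization Rₚ Sₚ Rₚ⁰
  haveI : Algebra.IsSeparable (FractionRing Rₚ) (FractionRing Sₚ) := inferInstance
  apply (IsLocalization.AtPrime.equivQuotMaximalIdeal p Rₚ).injective
  rw [norm_quotient_eq_norm_localization_quotient S p Rₚ Sₚ, IsScalarTower.algebraMap_eq S Sₚ,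
    RingHom.comp_apply, Ideal.Quotient.algebraMap_eq, norm_quotient_mk_aux,
    RingEquiv.apply_symm_apply, ← Algebra.intNorm_eq_norm,
    ← Algebra.intNorm_eq_of_isLocalization (A := R) (B := S) (M := p.primeCompl) (Aₘ := Rₚ) (Bₘ := Sₚ) x,
    ← Ideal.Quotient.algebraMap_eq, ← IsScalarTower.algebraMap_apply]
  simp only [IsLocalization.AtPrime.equivQuotMaximalIdeal, RingHom.quotientKerEquivOfSurjective,
    RingEquiv.coe_trans, Function.comp_apply, Ideal.quotEquivOfEq_mk,
    RingHom.quotientKerEquivOfRightInverse.apply, RingHom.kerLift_mk]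

end DedekindAux2

attribute [local instance] FractionRing.liftAlgebra FractionRing.isScalarTower_liftAlgebra

theorem norm_commutes_with_reduction
    (L K : Type*) [Field L] [NumberField L] [Field K] [NumberField K]
    [Algebra L K] [FiniteDimensional L K]
    (p : Ideal (𝓞 L)) (hp : p.IsPrime) (hbot : p ≠ ⊥)
    (hinert : (Ideal.map (algebraMap (𝓞 L) (𝓞 K)) p).IsPrime)
    (x : 𝓞 K) (n : 𝓞 L)
    (hn : algebraMap (𝓞 L) L n = Algebra.norm L (algebraMap (𝓞 K) K x)) :
    Ideal.Quotient.mk p n =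
      Algebra.norm (𝓞 L ⧸ p)
        (Ideal.Quotient.mk (Ideal.map (algebraMap (𝓞 L) (𝓞 K)) p) x) := by
  haveI : p.IsMaximal := Ideal.IsPrime.isMaximal hp hbot
  have hn' : n = Algebra.intNorm (𝓞 L) (𝓞 K) x := by
    apply IsFractionRing.injective (𝓞 L) L
    rw [hn, Algebra.algebraMap_intNorm (L := K)]
  rw [hn', norm_quotient_eq_of_isDedekindDomain p hbot x]
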